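/- arXiv:2211.09870 — 2 statements merged into one kernel-verified Lean document; each statement's English description precedes it below -/
import Mathlib

section
/- Let a_1 ≥ a_2 and b_1 ≥ b_2 be positive integers with b_1 ≥ a_1 and b_2 ≥ a_2. Then: (i) for every finite simple graph W with at least one vertex, t(K_{b_1, b_2}, W)^{a_1 a_2} ≥ t(K_{a_1, a_2}, W)^{b_1 b_2}; and (ii) for every real c < (b_1 b_2)/(a_1 a_2) there exists a finite simple graph W with t(K_{a_1,a_2}, W) > 0 and t(K_{b_1,b_2}, W) < t(K_{a_1,a_2}, W)^c. (That is, ρ(K_{a_1,a_2}, K_{b_1,b_2}) = b_1 b_2 / (a_1 a_2) in this regime.) -/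
open Finset


/-- The homomorphism density `t(G, W)`. -/
noncomputable def homDensity {α β : Type} [Fintype α] [Fintype β]
    (G : SimpleGraph α) (W : SimpleGraph β) : ℝ :=
  (Nat.card (G →g W) : ℝ) / (Fintype.card β : ℝ) ^ (Fintype.card α)

/-- The complete bipartite graph `K_{a,b}`. -/
def bipartite (a b : ℕ) : SimpleGraph (Fin a ⊕ Fin b) := completeBipartiteGraph (Fin a) (Fin b)

section Count

variable {β : Type} [Fintype β] (W : SimpleGraph β)

/-- number of common neighbors of a tuple -/
noncomputable def cnc {q : ℕ} (g : Fin q → β) : ℕ :=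
  Nat.card {v : β // ∀ j, W.Adj v (g j)}

def homEquivRight (p q : ℕ) :
    (bipartite p q →g W) ≃ Σ g : Fin q → β, (Fin p → {v : β // ∀ j, W.Adj v (g j)}) where
  toFun h := ⟨fun j => h (.inr j), fun i => ⟨h (.inl i), fun j => h.map_rel (by simp [bipartite])⟩⟩
  invFun x := ⟨Sum.elim (fun i => (x.2 i).1) x.1, by
    rintro (i | i) (j | j) hadj <;> simp [bipartite] at hadj
    · exact (x.2 i).2 j
    · exact ((x.2 j).2 i).symm⟩
  left_inv h := by
    apply DFunLike.ext
    rintro (i | j) <;> rfl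
  right_inv x := rfl

def homEquivLeft (p q : ℕ) :
    (bipartite p q →g W) ≃ Σ f : Fin p → β, (Fin q → {v : β // ∀ i, W.Adj v (f i)}) where
  toFun h := ⟨fun i => h (.inl i),
    fun j => ⟨h (.inr j), fun i => ((h.map_rel (by simp [bipartite]) : W.Adj (h (.inl i)) (h (.inr j)))).symm⟩⟩
  invFun x := ⟨Sum.elim x.1 (fun j => (x.2 j).1), by
    rintro (i | i) (j | j) hadj <;> simp [bipartite] at hadj
    · exact ((x.2 j).2 i).symm
    · exact (x.2 i).2 j⟩
  left_inv h := by
    apply DFunLike.ext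
    rintro (i | j) <;> rfl
  right_inv x := rfl

lemma card_hom_right (p q : ℕ) :
    Nat.card (bipartite p q →g W) = ∑ g : Fin q → β, (cnc W g) ^ p := by
  classical
  rw [Nat.card_congr (homEquivRight W p q), Nat.card_eq_fintype_card, Fintype.card_sigma]
  refine Finset.sum_congr rfl fun g _ => ?_
  rw [Fintype.card_fun, cnc, Nat.card_eq_fintype_card, Fintype.card_fin]

lemma card_hom_left (p q : ℕ) :
    Nat.card (bipartite p q →g W) = ∑ f : Fin p → β, (cnc W f) ^ q := by
  classical
  rw [Nat.card_congr (homEquivLeft W p q), Nat.card_eq_fintype_card, Fintype.card_sigma]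
  refine Finset.sum_congr rfl fun g _ => ?_
  rw [Fintype.card_fun, cnc, Nat.card_eq_fintype_card, Fintype.card_fin]

lemma homDensity_bipartite_right (p q : ℕ) :
    homDensity (bipartite p q) W
      = (∑ g : Fin q → β, ((cnc W g : ℝ)) ^ p) / (Fintype.card β : ℝ) ^ (p + q) := by
  rw [homDensity, card_hom_right]
  push_cast
  simp

lemma homDensity_bipartite_left (p q : ℕ) :
    homDensity (bipartite p q) W
      = (∑ f : Fin p → β, ((cnc W f : ℝ)) ^ q) / (Fintype.card β : ℝ) ^ (p + q) := by
  rw [homDensity, card_hom_left]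
  push_cast
  simp

lemma cnc_le {q : ℕ} (g : Fin q → β) : cnc W g ≤ Fintype.card β := by
  classical
  rw [cnc, Nat.card_eq_fintype_card]
  exact Fintype.card_subtype_le _

end Count

lemma sum_pow_le_key {ι : Type} [Fintype ι] (x : ι → ℝ) (hx : ∀ i, 0 ≤ x i) {p p' : ℕ}
    (hp : 0 < p) (hpp' : p ≤ p') :
    (∑ i, x i ^ p) ^ p' ≤ (∑ i, x i ^ p') ^ p * (Fintype.card ι : ℝ) ^ (p' - p) := by
  rcases eq_or_lt_of_le hpp' with rfl | hlt
  · simp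
  have hp0 : (0:ℝ) < p := by exact_mod_cast hp
  have hp'0 : (0:ℝ) < p' := by exact_mod_cast hp.trans hlt
  have hsub : (0:ℝ) < (p' : ℝ) - p := by
    have : (p:ℝ) < p' := by exact_mod_cast hlt
    linarith
  have hPgt : 1 < (p' : ℝ) / p := (one_lt_div hp0).2 (by exact_mod_cast hlt)
  have hpq : ((p' : ℝ)/p).HolderConjugate ((p' : ℝ)/((p':ℝ) - p)) := by
    rw [Real.holderConjugate_iff]
    constructor
    · exact hPgt
    · rw [inv_div, inv_div]
      field_simp
      ring
  have H := Real.inner_le_Lp_mul_Lq (s := (univ : Finset ι)) (fun i => x i ^ p)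
    (fun _ => (1:ℝ)) hpq
  simp only [mul_one] at H
  have h1 : ∀ i : ι, |x i ^ p| ^ ((p':ℝ)/p) = x i ^ p' := by
    intro i
    rw [abs_of_nonneg (pow_nonneg (hx i) p), ← Real.rpow_natCast (x i) p,
      ← Real.rpow_mul (hx i)]
    have : (p:ℝ) * ((p':ℝ)/(p:ℝ)) = (p' : ℝ) := by field_simp
    rw [this, Real.rpow_natCast]
  have h2 : |(1:ℝ)| ^ ((p':ℝ)/((p':ℝ)-(p:ℝ))) = 1 := by
    simp [Real.one_rpow]
  simp only [h1, h2, Finset.sum_const, Finset.card_univ, nsmul_eq_mul, mul_one] at H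
  -- H : ∑ x^p ≤ (∑ x^p')^(1/(p'/p)) * N^(1/(p'/(p'-p)))
  have hS' : (0:ℝ) ≤ ∑ i, x i ^ p' := Finset.sum_nonneg fun i _ => pow_nonneg (hx i) _
  have hN : (0:ℝ) ≤ (Fintype.card ι : ℝ) := by positivity
  have hLHS : (0:ℝ) ≤ ∑ i, x i ^ p := Finset.sum_nonneg fun i _ => pow_nonneg (hx i) _
  have H2 := pow_le_pow_left₀ hLHS H p'
  refine H2.trans (le_of_eq ?_)
  rw [mul_pow]
  congr 1
  · rw [← Real.rpow_natCast ((∑ i, x i ^ p') ^ (1 / ((p':ℝ)/p))) p', ← Real.rpow_mul hS']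
    have : 1 / ((p':ℝ)/p) * (p' : ℝ) = (p : ℝ) := by field_simp
    rw [this, Real.rpow_natCast]
  · rw [← Real.rpow_natCast ((Fintype.card ι : ℝ) ^ (1 / ((p':ℝ)/((p':ℝ)-p)))) p',
      ← Real.rpow_mul hN]
    have : 1 / ((p':ℝ)/((p':ℝ)-p)) * (p' : ℝ) = ((p' - p : ℕ) : ℝ) := by
      rw [Nat.cast_sub hpp']
      field_simp
    rw [this, Real.rpow_natCast]

lemma homDensity_nonneg {α β : Type} [Fintype α] [Fintype β] (G : SimpleGraph α)
    (W : SimpleGraph β) : 0 ≤ homDensity G W := by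
  unfold homDensity; positivity

section Steps

variable {β : Type} [Fintype β] [Nonempty β] (W : SimpleGraph β)

lemma density_step_right {p p' : ℕ} (q : ℕ) (hp : 0 < p) (hpp' : p ≤ p') :
    homDensity (bipartite p q) W ^ p' ≤ homDensity (bipartite p' q) W ^ p := by
  have hn : 0 < (Fintype.card β : ℝ) := by
    have := Fintype.card_pos (α := β); positivity
  rw [homDensity_bipartite_right W p q, homDensity_bipartite_right W p' q, div_pow, div_pow]
  set n : ℝ := (Fintype.card β : ℝ) with hn'
  have key := sum_pow_le_key (fun g : Fin q → β => (cnc W g : ℝ))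
    (fun g => Nat.cast_nonneg _) hp hpp'
  have hcard : ((Fintype.card (Fin q → β) : ℕ) : ℝ) = n ^ q := by
    rw [Fintype.card_fun, Fintype.card_fin]; push_cast; rfl
  rw [hcard] at key
  rw [div_le_div_iff₀ (by positivity) (by positivity)]
  calc (∑ g : Fin q → β, (cnc W g : ℝ) ^ p) ^ p' * (n ^ (p' + q)) ^ p
      ≤ ((∑ g : Fin q → β, (cnc W g : ℝ) ^ p') ^ p * (n ^ q) ^ (p' - p)) * (n ^ (p' + q)) ^ p :=
        mul_le_mul_of_nonneg_right key (by positivity)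
    _ = (∑ g : Fin q → β, (cnc W g : ℝ) ^ p') ^ p * (n ^ (p + q)) ^ p' := by
        obtain ⟨m, rfl⟩ := Nat.exists_eq_add_of_le hpp'
        rw [mul_assoc, ← pow_mul, ← pow_mul, ← pow_add, ← pow_mul]
        congr 2
        rw [Nat.add_sub_cancel_left]
        ring

lemma density_step_left (p : ℕ) {q q' : ℕ} (hq : 0 < q) (hqq' : q ≤ q') :
    homDensity (bipartite p q) W ^ q' ≤ homDensity (bipartite p q') W ^ q := by
  have hn : 0 < (Fintype.card β : ℝ) := by
    have := Fintype.card_pos (α := β); positivity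
  rw [homDensity_bipartite_left W p q, homDensity_bipartite_left W p q', div_pow, div_pow]
  set n : ℝ := (Fintype.card β : ℝ) with hn'
  have key := sum_pow_le_key (fun f : Fin p → β => (cnc W f : ℝ))
    (fun f => Nat.cast_nonneg _) hq hqq'
  have hcard : ((Fintype.card (Fin p → β) : ℕ) : ℝ) = n ^ p := by
    rw [Fintype.card_fun, Fintype.card_fin]; push_cast; rfl
  rw [hcard] at key
  rw [div_le_div_iff₀ (by positivity) (by positivity)]
  calc (∑ f : Fin p → β, (cnc W f : ℝ) ^ q) ^ q' * (n ^ (p + q')) ^ q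
      ≤ ((∑ f : Fin p → β, (cnc W f : ℝ) ^ q') ^ q * (n ^ p) ^ (q' - q)) * (n ^ (p + q')) ^ q :=
        mul_le_mul_of_nonneg_right key (by positivity)
    _ = (∑ f : Fin p → β, (cnc W f : ℝ) ^ q') ^ q * (n ^ (p + q)) ^ q' := by
        obtain ⟨m, rfl⟩ := Nat.exists_eq_add_of_le hqq'
        rw [mul_assoc, ← pow_mul, ← pow_mul, ← pow_add, ← pow_mul]
        congr 2
        rw [Nat.add_sub_cancel_left]
        ring

lemma part_one (a₁ a₂ b₁ b₂ : ℕ) (ha₁ : 0 < a₁) (ha₂ : 0 < a₂)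
    (h₁ : a₁ ≤ b₁) (h₂ : a₂ ≤ b₂) :
    homDensity (bipartite a₁ a₂) W ^ (b₁ * b₂) ≤ homDensity (bipartite b₁ b₂) W ^ (a₁ * a₂) := by
  calc homDensity (bipartite a₁ a₂) W ^ (b₁ * b₂)
      = (homDensity (bipartite a₁ a₂) W ^ b₁) ^ b₂ := by rw [← pow_mul]
    _ ≤ (homDensity (bipartite b₁ a₂) W ^ a₁) ^ b₂ :=
        pow_le_pow_left₀ (pow_nonneg (homDensity_nonneg _ _) _)
          (density_step_right W a₂ ha₁ h₁) _
    _ = (homDensity (bipartite b₁ a₂) W ^ b₂) ^ a₁ := by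
        rw [← pow_mul, ← pow_mul, mul_comm]
    _ ≤ (homDensity (bipartite b₁ b₂) W ^ a₂) ^ a₁ :=
        pow_le_pow_left₀ (pow_nonneg (homDensity_nonneg _ _) _)
          (density_step_left W b₁ ha₂ h₂) _
    _ = homDensity (bipartite b₁ b₂) W ^ (a₁ * a₂) := by rw [← pow_mul, mul_comm]

end Steps

lemma card_eq_fixed_pair_le {q k : ℕ} {j j' : Fin q} (hne : j ≠ j') :
    ((univ : Finset (Fin q → Fin k)).filter (fun g => g j = g j')).card ≤ k ^ (q - 1) := by
  classical
  have hsub : Fintype.card {x : Fin q // x ≠ j} = q - 1 := by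
    have h1 := Fintype.card_subtype_compl (fun x : Fin q => x = j)
    have h2 : Fintype.card {x : Fin q // x = j} = 1 := Fintype.card_subtype_eq j
    simpa [h2, Fintype.card_fin] using h1
  calc ((univ : Finset (Fin q → Fin k)).filter (fun g => g j = g j')).card
      ≤ (univ : Finset ({x : Fin q // x ≠ j} → Fin k)).card := by
        apply Finset.card_le_card_of_injOn (fun g => fun x : {x : Fin q // x ≠ j} => g x.1)
          (fun _ _ => mem_univ _)
        intro g hg g' hg' h
        funext x
        by_cases hx : x = j
        · subst hx
          have h1 : g x = g j' := (mem_filter.mp hg).2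
          have h2 : g' x = g' j' := (mem_filter.mp hg').2
          have h3 : g j' = g' j' := congrFun h ⟨j', Ne.symm hne⟩
          rw [h1, h3, ← h2]
        · exact congrFun h ⟨x, hx⟩
    _ = k ^ (q - 1) := by rw [card_univ, Fintype.card_fun, Fintype.card_fin, hsub]

lemma card_noninj_le (q k : ℕ) :
    ((univ : Finset (Fin q → Fin k)).filter (fun g => ¬ Function.Injective g)).card
      ≤ q ^ 2 * k ^ (q - 1) := by
  classical
  have hsub : (univ.filter (fun g : Fin q → Fin k => ¬ Function.Injective g)) ⊆
      (univ.offDiag).biUnion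
        (fun jj => univ.filter (fun g : Fin q → Fin k => g jj.1 = g jj.2)) := by
    intro g hg
    rw [mem_filter] at hg
    simp only [Function.Injective] at hg
    push_neg at hg
    obtain ⟨j, j', hjj', hne⟩ := hg.2
    exact Finset.mem_biUnion.mpr ⟨(j, j'), Finset.mem_offDiag.mpr ⟨mem_univ _, mem_univ _, hne⟩,
      mem_filter.mpr ⟨mem_univ _, hjj'⟩⟩
  refine (Finset.card_le_card hsub).trans ((Finset.card_biUnion_le).trans ?_)
  calc ∑ jj ∈ univ.offDiag,
        ((univ : Finset (Fin q → Fin k)).filter (fun g => g jj.1 = g jj.2)).card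
      ≤ (univ.offDiag (α := Fin q)).card * k ^ (q - 1) := by
        rw [← smul_eq_mul]
        apply Finset.sum_le_card_nsmul
        intro jj hjj
        exact card_eq_fixed_pair_le (Finset.mem_offDiag.mp hjj).2.2
    _ ≤ q ^ 2 * k ^ (q - 1) := by
        apply Nat.mul_le_mul_right
        rw [Finset.offDiag_card, card_univ, Fintype.card_fin]
        calc q * q - q ≤ q * q := Nat.sub_le _ _
          _ = q ^ 2 := (sq q).symm
section TopGraph

variable {k q : ℕ}

lemma cnc_top_eq (g : Fin q → Fin k) :
    cnc (⊤ : SimpleGraph (Fin k)) g = k - (univ.image g).card := by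
  classical
  rw [cnc, Nat.card_eq_fintype_card, Fintype.card_subtype]
  have : (univ.filter (fun v : Fin k => ∀ j, (⊤ : SimpleGraph (Fin k)).Adj v (g j)))
      = (univ.image g)ᶜ := by
    ext v
    simp [SimpleGraph.top_adj, eq_comm]
  rw [this, Finset.card_compl, Fintype.card_fin]

lemma cnc_top_ge (g : Fin q → Fin k) : k - q ≤ cnc (⊤ : SimpleGraph (Fin k)) g := by
  rw [cnc_top_eq]
  apply Nat.sub_le_sub_left
  exact (Finset.card_image_le).trans (by rw [card_univ, Fintype.card_fin])

lemma cnc_top_le (hq : 0 < q) (g : Fin q → Fin k) :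
    cnc (⊤ : SimpleGraph (Fin k)) g ≤ k - 1 := by
  rw [cnc_top_eq]
  apply Nat.sub_le_sub_left
  exact Finset.card_pos.mpr ⟨g ⟨0, hq⟩, Finset.mem_image_of_mem g (mem_univ _)⟩

lemma cnc_top_inj {g : Fin q → Fin k} (hg : Function.Injective g) :
    cnc (⊤ : SimpleGraph (Fin k)) g = k - q := by
  rw [cnc_top_eq, Finset.card_image_of_injective _ hg, card_univ, Fintype.card_fin]

end TopGraph
lemma pow_one_sub_le (x : ℝ) (h0 : 0 ≤ x) (h1 : x ≤ 1) (n : ℕ) :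
    (1 - x) ^ n ≤ 1 - n * x + (n * x) ^ 2 := by
  induction n with
  | zero => norm_num
  | succ n ih =>
    have hx : (0:ℝ) ≤ 1 - x := by linarith
    have h2 : (1 - x) ^ (n + 1) = (1 - x) ^ n * (1 - x) := pow_succ _ _
    have h3 : (1 - x) ^ n * (1 - x) ≤ (1 - n * x + (n * x) ^ 2) * (1 - x) :=
      mul_le_mul_of_nonneg_right ih hx
    rw [h2]
    refine h3.trans ?_
    push_cast
    nlinarith [sq_nonneg ((n:ℝ) * x), mul_nonneg (mul_nonneg (Nat.cast_nonneg n) h0) h0,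
      mul_nonneg (mul_nonneg (mul_nonneg (Nat.cast_nonneg n) (Nat.cast_nonneg n)) h0) h0]

lemma pow_sub_pow_le' (x y : ℝ) (hy : 0 ≤ y) (hxy : y ≤ x) (n : ℕ) :
    x ^ (n + 1) - y ^ (n + 1) ≤ ((n:ℝ) + 1) * x ^ n * (x - y) := by
  induction n with
  | zero => norm_num
  | succ n ih =>
    have hx : (0:ℝ) ≤ x := hy.trans hxy
    have hyx : y ^ (n + 1) ≤ x ^ (n + 1) := pow_le_pow_left₀ hy hxy _
    calc x ^ (n + 2) - y ^ (n + 2)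
        = x * (x ^ (n + 1) - y ^ (n + 1)) + (x - y) * y ^ (n + 1) := by ring
      _ ≤ x * (((n:ℝ) + 1) * x ^ n * (x - y)) + (x - y) * x ^ (n + 1) := by
          apply add_le_add (mul_le_mul_of_nonneg_left ih hx)
            (mul_le_mul_of_nonneg_left hyx (by linarith))
      _ = ((↑(n + 1) : ℝ) + 1) * x ^ (n + 1) * (x - y) := by push_cast; ring

lemma rpow_ge_one_sub (t : ℝ) (ht0 : 0 < t) (ht1 : t ≤ 1) (c' : ℝ) :
    1 - (max c' 1) * (1 - t) ≤ t ^ c' := by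
  rcases le_total c' 1 with h | h
  · rw [max_eq_right h]
    have h2 : t ^ (1:ℝ) ≤ t ^ c' := Real.rpow_le_rpow_of_exponent_ge ht0 ht1 h
    rw [Real.rpow_one] at h2
    linarith
  · rw [max_eq_left h]
    have hb := one_add_mul_self_le_rpow_one_add (s := t - 1) (by linarith) (p := c') h
    have h3 : (1 : ℝ) + (t - 1) = t := by ring
    rw [h3] at hb
    linarith

section TopDensity

lemma density_top_ge (p q k : ℕ) (hk : 0 < k) (hqk : q ≤ k) :
    1 - ((p:ℝ) * q) / k ≤ homDensity (bipartite p q) (⊤ : SimpleGraph (Fin k)) := by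
  have hkR : (0:ℝ) < k := by exact_mod_cast hk
  have hqkR : (q:ℝ) ≤ k := by exact_mod_cast hqk
  rw [homDensity_bipartite_right]
  simp only [Fintype.card_fin]
  have hterm : ∀ g : Fin q → Fin k, ((k:ℝ) - q) ^ p ≤ (cnc ⊤ g : ℝ) ^ p := by
    intro g
    apply pow_le_pow_left₀ (by linarith)
    calc ((k:ℝ) - q) = ((k - q : ℕ) : ℝ) := by rw [Nat.cast_sub hqk]
      _ ≤ (cnc ⊤ g : ℝ) := by exact_mod_cast cnc_top_ge g
  have hsum : (k:ℝ)^q * ((k:ℝ) - q)^p ≤ ∑ g : Fin q → Fin k, (cnc ⊤ g : ℝ)^p := by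
    calc (k:ℝ)^q * ((k:ℝ) - q)^p = ∑ _g : Fin q → Fin k, ((k:ℝ) - q)^p := by
          simp only [Finset.sum_const, card_univ, Fintype.card_fun, Fintype.card_fin,
            nsmul_eq_mul]
          push_cast
          ring
      _ ≤ _ := Finset.sum_le_sum fun g _ => hterm g
  have hber := one_add_mul_le_pow (a := -((q:ℝ)/k)) (by
    have : (q:ℝ)/k ≤ 1 := (div_le_one hkR).mpr hqkR
    linarith) p
  calc 1 - ((p:ℝ) * q) / k = 1 + (p:ℝ) * -((q:ℝ)/k) := by ring
    _ ≤ (1 + -((q:ℝ)/k))^p := hber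
    _ = (((k:ℝ) - q)/k)^p := by
        congr 1
        field_simp
        ring
    _ = ((k:ℝ)^q * ((k:ℝ) - q)^p) / (k:ℝ)^(p+q) := by
        rw [div_pow, pow_add]
        rw [div_eq_div_iff (by positivity) (by positivity)]
        ring
    _ ≤ _ := div_le_div_of_nonneg_right hsum (by positivity)

lemma density_top_le (p q k : ℕ) (hq : 0 < q) (hk : 0 < k) :
    homDensity (bipartite p q) (⊤ : SimpleGraph (Fin k)) ≤ (((k:ℝ) - 1)/k)^p := by
  have hkR : (0:ℝ) < k := by exact_mod_cast hk
  rw [homDensity_bipartite_right]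
  simp only [Fintype.card_fin]
  have hterm : ∀ g : Fin q → Fin k, (cnc ⊤ g : ℝ) ^ p ≤ ((k:ℝ) - 1) ^ p := by
    intro g
    apply pow_le_pow_left₀ (Nat.cast_nonneg _)
    calc (cnc ⊤ g : ℝ) ≤ ((k - 1 : ℕ) : ℝ) := by exact_mod_cast cnc_top_le hq g
      _ ≤ (k:ℝ) - 1 := by
          rw [Nat.cast_sub hk]
          norm_num
  have hsum : (∑ g : Fin q → Fin k, (cnc ⊤ g : ℝ)^p) ≤ (k:ℝ)^q * ((k:ℝ) - 1)^p := by
    calc (∑ g : Fin q → Fin k, (cnc ⊤ g : ℝ)^p) ≤ ∑ _g : Fin q → Fin k, ((k:ℝ) - 1)^p :=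
          Finset.sum_le_sum fun g _ => hterm g
      _ = (k:ℝ)^q * ((k:ℝ) - 1)^p := by
          simp only [Finset.sum_const, card_univ, Fintype.card_fun, Fintype.card_fin,
            nsmul_eq_mul]
          push_cast
          ring
  calc (∑ g : Fin q → Fin k, (cnc ⊤ g : ℝ)^p) / (k:ℝ)^(p+q)
      ≤ ((k:ℝ)^q * ((k:ℝ) - 1)^p) / (k:ℝ)^(p+q) := div_le_div_of_nonneg_right hsum (by positivity)
    _ = (((k:ℝ) - 1)/k)^p := by
        rw [div_pow, pow_add]
        rw [div_eq_div_iff (by positivity) (by positivity)]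
        ring

end TopDensity
lemma density_top_refined (p q k : ℕ) (hp : 0 < p) (hq : 0 < q) (hqk : q ≤ k) :
    homDensity (bipartite p q) (⊤ : SimpleGraph (Fin k))
      ≤ (1 - (q:ℝ)/k)^p + ((p:ℝ) * (q:ℝ)^3) / (k:ℝ)^2 := by
  classical
  have hk : 0 < k := lt_of_lt_of_le hq hqk
  have hkR : (0:ℝ) < k := by exact_mod_cast hk
  have hqkR : (q:ℝ) ≤ k := by exact_mod_cast hqk
  have hk1 : (1:ℝ) ≤ k := by exact_mod_cast hk
  obtain ⟨m, rfl⟩ := Nat.exists_eq_succ_of_ne_zero hp.ne'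
  obtain ⟨r, rfl⟩ := Nat.exists_eq_succ_of_ne_zero hq.ne'
  rw [homDensity_bipartite_right]
  simp only [Fintype.card_fin]
  set I : Finset (Fin (r+1) → Fin k) := univ.filter (fun g => Function.Injective g) with hIdef
  set Nn : Finset (Fin (r+1) → Fin k) :=
    univ.filter (fun g => ¬ Function.Injective g) with hNdef
  have hsplit : (∑ g : Fin (r+1) → Fin k, (cnc ⊤ g : ℝ)^(m+1))
      = (∑ g ∈ I, (cnc ⊤ g : ℝ)^(m+1)) + ∑ g ∈ Nn, (cnc ⊤ g : ℝ)^(m+1) :=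
    (Finset.sum_filter_add_sum_filter_not univ _ _).symm
  have hqcast : ((r:ℝ) + 1) = ((r + 1 : ℕ) : ℝ) := by push_cast; ring
  have hkq : ((k:ℝ) - ((r:ℝ)+1)) = ((k - (r+1) : ℕ) : ℝ) := by
    rw [Nat.cast_sub hqk]; push_cast; ring
  have hkq0 : (0:ℝ) ≤ (k:ℝ) - ((r:ℝ)+1) := by
    rw [hkq]; positivity
  have hI : (∑ g ∈ I, (cnc ⊤ g : ℝ)^(m+1))
      ≤ (I.card : ℝ) * ((k:ℝ) - ((r:ℝ)+1))^(m+1) := by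
    rw [← nsmul_eq_mul]
    apply Finset.sum_le_card_nsmul
    intro g hg
    have hginj : Function.Injective g := (Finset.mem_filter.mp hg).2
    rw [cnc_top_inj hginj]
    rw [hkq]
  have hN : (∑ g ∈ Nn, (cnc ⊤ g : ℝ)^(m+1)) ≤ (Nn.card : ℝ) * ((k:ℝ) - 1)^(m+1) := by
    rw [← nsmul_eq_mul]
    apply Finset.sum_le_card_nsmul
    intro g _
    apply pow_le_pow_left₀ (Nat.cast_nonneg _)
    calc (cnc ⊤ g : ℝ) ≤ ((k - 1 : ℕ) : ℝ) := by exact_mod_cast cnc_top_le (Nat.succ_pos r) g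
      _ ≤ (k:ℝ) - 1 := by rw [Nat.cast_sub hk]; norm_num
  have hcard_sum : (I.card : ℝ) + (Nn.card : ℝ) = (k:ℝ)^(r+1) := by
    have := Finset.card_filter_add_card_filter_not
      (s := (univ : Finset (Fin (r+1) → Fin k))) (p := fun g => Function.Injective g)
    rw [card_univ, Fintype.card_fun, Fintype.card_fin, Fintype.card_fin] at this
    exact_mod_cast this
  have hNn_le : (Nn.card : ℝ) ≤ ((r:ℝ)+1)^2 * (k:ℝ)^r := by
    have := card_noninj_le (r+1) k
    simp only [Nat.add_sub_cancel] at this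
    calc (Nn.card : ℝ) ≤ (((r+1)^2 * k^r : ℕ) : ℝ) := by exact_mod_cast this
      _ = ((r:ℝ)+1)^2 * (k:ℝ)^r := by push_cast; ring
  have hdiff0 : ((k:ℝ) - ((r:ℝ)+1))^(m+1) ≤ ((k:ℝ)-1)^(m+1) :=
    pow_le_pow_left₀ hkq0 (by linarith) _
  have hdiff : ((k:ℝ)-1)^(m+1) - ((k:ℝ) - ((r:ℝ)+1))^(m+1)
      ≤ ((m:ℝ)+1) * (k:ℝ)^m * ((r:ℝ)+1) := by
    have h1 := pow_sub_pow_le' ((k:ℝ)-1) ((k:ℝ) - ((r:ℝ)+1)) hkq0 (by linarith) m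
    have h2 : ((k:ℝ)-1) - ((k:ℝ) - ((r:ℝ)+1)) = (r:ℝ) := by ring
    rw [h2] at h1
    refine h1.trans ?_
    have h3 : ((k:ℝ)-1)^m ≤ (k:ℝ)^m := pow_le_pow_left₀ (by linarith) (by linarith) _
    have h4 : (0:ℝ) ≤ (m:ℝ)+1 := by positivity
    have h5 : (0:ℝ) ≤ (r:ℝ) := by positivity
    calc ((m:ℝ)+1) * ((k:ℝ)-1)^m * (r:ℝ) ≤ ((m:ℝ)+1) * (k:ℝ)^m * (r:ℝ) :=
          mul_le_mul_of_nonneg_right (mul_le_mul_of_nonneg_left h3 h4) h5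
      _ ≤ ((m:ℝ)+1) * (k:ℝ)^m * ((r:ℝ)+1) := by
          apply mul_le_mul_of_nonneg_left (by linarith) (by positivity)
  have key : (∑ g : Fin (r+1) → Fin k, (cnc ⊤ g : ℝ)^(m+1))
      ≤ (k:ℝ)^(r+1) * ((k:ℝ) - ((r:ℝ)+1))^(m+1)
        + (((r:ℝ)+1)^2 * (k:ℝ)^r) * (((m:ℝ)+1) * (k:ℝ)^m * ((r:ℝ)+1)) := by
    rw [hsplit]
    have step1 : (∑ g ∈ I, (cnc ⊤ g : ℝ)^(m+1)) + ∑ g ∈ Nn, (cnc ⊤ g : ℝ)^(m+1)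
        ≤ (I.card : ℝ) * ((k:ℝ) - ((r:ℝ)+1))^(m+1) + (Nn.card : ℝ) * ((k:ℝ)-1)^(m+1) :=
      add_le_add hI hN
    refine step1.trans ?_
    have expand : (I.card : ℝ) * ((k:ℝ) - ((r:ℝ)+1))^(m+1) + (Nn.card : ℝ) * ((k:ℝ)-1)^(m+1)
        = ((I.card : ℝ) + Nn.card) * ((k:ℝ) - ((r:ℝ)+1))^(m+1)
          + (Nn.card : ℝ) * (((k:ℝ)-1)^(m+1) - ((k:ℝ) - ((r:ℝ)+1))^(m+1)) := by ring
    rw [expand, hcard_sum]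
    apply add_le_add_right
    apply mul_le_mul hNn_le hdiff (by linarith) (by positivity)
  calc (∑ g : Fin (r+1) → Fin k, (cnc ⊤ g : ℝ)^(m+1)) / (k:ℝ)^((m+1)+(r+1))
      ≤ ((k:ℝ)^(r+1) * ((k:ℝ) - ((r:ℝ)+1))^(m+1)
          + (((r:ℝ)+1)^2 * (k:ℝ)^r) * (((m:ℝ)+1) * (k:ℝ)^m * ((r:ℝ)+1))) / (k:ℝ)^((m+1)+(r+1)) :=
        div_le_div_of_nonneg_right key (by positivity)
    _ = (((k:ℝ) - ((r:ℝ)+1))/k)^(m+1) + (((m:ℝ)+1) * ((r:ℝ)+1)^3) / (k:ℝ)^2 := by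
        rw [add_div]
        congr 1
        · rw [div_pow]
          rw [show (k:ℝ)^((m+1)+(r+1)) = (k:ℝ)^(r+1) * (k:ℝ)^(m+1) by
            rw [← pow_add]; congr 1; omega]
          rw [mul_div_mul_left _ _ (by positivity : ((k:ℝ)^(r+1)) ≠ 0)]
        · rw [show (k:ℝ)^((m+1)+(r+1)) = ((k:ℝ)^r * (k:ℝ)^m) * (k:ℝ)^2 by
            rw [← pow_add, ← pow_add]; congr 1; omega]
          rw [div_eq_div_iff (by positivity) (by positivity)]
          ring
    _ = _ := by
        have h7 : ((k:ℝ) - ((r:ℝ)+1))/k = 1 - ((r:ℝ)+1)/k := by field_simp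
        rw [h7]
        simp only [Nat.succ_eq_add_one]
        push_cast
        ring
set_option maxHeartbeats 2000000 in
theorem stmt_16 (a₁ a₂ b₁ b₂ : ℕ) (ha₂ : 0 < a₂) (hb₂ : 0 < b₂)
    (ha : a₂ ≤ a₁) (hb : b₂ ≤ b₁) (h₁ : a₁ ≤ b₁) (h₂ : a₂ ≤ b₂) :
    (∀ (β : Type) [Fintype β] [Nonempty β] (W : SimpleGraph β),
      homDensity (bipartite b₁ b₂) W ^ (a₁ * a₂) ≥
        homDensity (bipartite a₁ a₂) W ^ (b₁ * b₂)) ∧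
    (∀ c : ℝ, c < ((b₁ : ℝ) * b₂) / ((a₁ : ℝ) * a₂) →
      ∃ (N : ℕ) (W : SimpleGraph (Fin N)), 0 < N ∧
        0 < homDensity (bipartite a₁ a₂) W ∧
        homDensity (bipartite b₁ b₂) W < homDensity (bipartite a₁ a₂) W ^ c) := by
  have ha₁ : 0 < a₁ := lt_of_lt_of_le ha₂ ha
  have hb₁ : 0 < b₁ := lt_of_lt_of_le hb₂ hb
  constructor
  · intro β _ _ W
    exact part_one W a₁ a₂ b₁ b₂ ha₁ ha₂ h₁ h₂
  · intro c hc
    by_cases hEq : a₁ = b₁ ∧ a₂ = b₂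
    · obtain ⟨h1, h2⟩ := hEq
      subst h1; subst h2
      have hc1 : c < 1 := by
        have hd : ((a₁:ℝ) * a₂) / ((a₁:ℝ) * a₂) = 1 := div_self (by positivity)
        rwa [hd] at hc
      have hk0 : 0 < a₁ * a₂ + 1 := Nat.succ_pos _
      have hkR : (0:ℝ) < ((a₁ * a₂ + 1 : ℕ) : ℝ) := by positivity
      have ha₂k : a₂ ≤ a₁ * a₂ + 1 := by
        calc a₂ = 1 * a₂ := (one_mul _).symm
          _ ≤ a₁ * a₂ := Nat.mul_le_mul_right _ ha₁
          _ ≤ a₁ * a₂ + 1 := Nat.le_succ _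
      have hlow := density_top_ge a₁ a₂ (a₁ * a₂ + 1) hk0 ha₂k
      have hAk : ((a₁:ℝ) * a₂) / ((a₁ * a₂ + 1 : ℕ):ℝ) < 1 := by
        rw [div_lt_one hkR]
        push_cast
        linarith
      have htpos : 0 < homDensity (bipartite a₁ a₂) (⊤ : SimpleGraph (Fin (a₁ * a₂ + 1))) := by
        apply lt_of_lt_of_le _ hlow
        linarith
      have htlt1 : homDensity (bipartite a₁ a₂) (⊤ : SimpleGraph (Fin (a₁ * a₂ + 1))) < 1 := by
        refine lt_of_le_of_lt (density_top_le a₁ a₂ (a₁ * a₂ + 1) ha₂ hk0) ?_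
        apply pow_lt_one₀ ?_ ?_ ha₁.ne'
        · apply div_nonneg _ (le_of_lt hkR)
          have h5 : (1:ℝ) ≤ ((a₁ * a₂ + 1 : ℕ):ℝ) := by exact_mod_cast hk0
          linarith
        · rw [div_lt_one hkR]
          linarith
      refine ⟨a₁ * a₂ + 1, ⊤, hk0, htpos, ?_⟩
      calc homDensity (bipartite a₁ a₂) (⊤ : SimpleGraph (Fin (a₁ * a₂ + 1)))
          = homDensity (bipartite a₁ a₂) (⊤ : SimpleGraph (Fin (a₁ * a₂ + 1))) ^ (1:ℝ) :=
            (Real.rpow_one _).symm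
        _ < _ := Real.rpow_lt_rpow_of_exponent_gt htpos htlt1 hc1
    · -- strict case A < B
      have hABR : (a₁:ℝ) * a₂ < (b₁:ℝ) * b₂ := by
        have c1 : (a₁:ℝ) ≤ b₁ := by exact_mod_cast h₁
        have c2 : (a₂:ℝ) ≤ b₂ := by exact_mod_cast h₂
        have c3 : (0:ℝ) < a₁ := by exact_mod_cast ha₁
        have c4 : (0:ℝ) < a₂ := by exact_mod_cast ha₂
        rcases not_and_or.mp hEq with h | h
        · have h' : (a₁:ℝ) < b₁ := by exact_mod_cast lt_of_le_of_ne h₁ h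
          nlinarith
        · have h' : (a₂:ℝ) < b₂ := by exact_mod_cast lt_of_le_of_ne h₂ h
          nlinarith
      set A : ℝ := (a₁:ℝ) * a₂ with hA
      set B : ℝ := (b₁:ℝ) * b₂ with hB
      have hA0 : 0 < A := by
        rw [hA]
        have c3 : (0:ℝ) < a₁ := by exact_mod_cast ha₁
        have c4 : (0:ℝ) < a₂ := by exact_mod_cast ha₂
        positivity
      have hB0 : 0 < B := lt_trans hA0 hABR
      have hA1 : 1 ≤ A := by
        rw [hA]
        have h6 : (1:ℕ) ≤ a₁ * a₂ := Nat.mul_pos ha₁ ha₂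
        exact_mod_cast h6
      set c' : ℝ := max c (B/(2*A)) with hc'
      have hc'pos : 0 < c' := lt_of_lt_of_le (by positivity) (le_max_right _ _)
      have hc'lt : c' < B/A := by
        apply max_lt hc
        exact div_lt_div_of_pos_left hB0 hA0 (by linarith)
      set C : ℝ := max c' 1 with hC
      have hC1 : 1 ≤ C := le_max_right _ _
      have hC0 : 0 < C := lt_of_lt_of_le one_pos hC1
      have hCA : C * A < B := by
        rcases le_total c' 1 with h | h
        · rw [hC, max_eq_right h, one_mul]; linarith
        · rw [hC, max_eq_left h]
          have := (lt_div_iff₀ hA0).mp hc'lt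
          linarith
      set D : ℝ := B - C * A with hD
      have hD0 : 0 < D := by rw [hD]; linarith
      set E : ℝ := B^2 + (b₁:ℝ) * (b₂:ℝ)^3 with hE
      have hE0 : 0 ≤ E := by
        rw [hE]
        have := hB0.le
        positivity
      obtain ⟨k, hk⟩ := exists_nat_gt (max (max A B) (E/D))
      have hkA : A < k := lt_of_le_of_lt ((le_max_left A B).trans (le_max_left _ _)) hk
      have hkB : B < k := lt_of_le_of_lt ((le_max_right A B).trans (le_max_left _ _)) hk
      have hkED : E/D < k := lt_of_le_of_lt (le_max_right _ _) hk
      have hkR : (0:ℝ) < k := lt_trans hA0 hkA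
      have hk0 : 0 < k := by exact_mod_cast hkR
      have hk1 : (1:ℝ) ≤ k := by exact_mod_cast hk0
      have ha₂R : (a₂:ℝ) ≤ A := by
        rw [hA]
        have h7 : (1:ℝ) ≤ (a₁:ℝ) := by exact_mod_cast ha₁
        nlinarith [Nat.cast_nonneg (α := ℝ) a₂]
      have hb₂R : (b₂:ℝ) ≤ B := by
        rw [hB]
        have h8 : (1:ℝ) ≤ (b₁:ℝ) := by exact_mod_cast hb₁
        nlinarith [Nat.cast_nonneg (α := ℝ) b₂]
      have ha₂k : a₂ ≤ k := by
        have h9 : (a₂:ℝ) ≤ (k:ℝ) := le_of_lt (lt_of_le_of_lt ha₂R hkA)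
        exact_mod_cast h9
      have hb₂k : b₂ ≤ k := by
        have h9 : (b₂:ℝ) ≤ (k:ℝ) := le_of_lt (lt_of_le_of_lt hb₂R hkB)
        exact_mod_cast h9
      have hb₂kR : (b₂:ℝ) ≤ k := by exact_mod_cast hb₂k
      -- bounds on t_a
      have hta_low : 1 - A/k ≤ homDensity (bipartite a₁ a₂) (⊤ : SimpleGraph (Fin k)) := by
        have h10 := density_top_ge a₁ a₂ k hk0 ha₂k
        rwa [← hA] at h10
      have hta_pos : 0 < homDensity (bipartite a₁ a₂) (⊤ : SimpleGraph (Fin k)) := by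
        apply lt_of_lt_of_le _ hta_low
        have h11 : A/k < 1 := (div_lt_one hkR).mpr hkA
        linarith
      have hta_le1 : homDensity (bipartite a₁ a₂) (⊤ : SimpleGraph (Fin k)) ≤ 1 := by
        refine (density_top_le a₁ a₂ k ha₂ hk0).trans ?_
        apply pow_le_one₀ (div_nonneg (by linarith) hkR.le) ?_
        rw [div_le_one hkR]
        linarith
      -- bound on t_b
      have htb : homDensity (bipartite b₁ b₂) (⊤ : SimpleGraph (Fin k))
          ≤ 1 - B/k + E/k^2 := by
        have h12 := density_top_refined b₁ b₂ k hb₁ hb₂ hb₂k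
        have h13 : (1 - (b₂:ℝ)/k)^b₁ ≤ 1 - B/k + (B/k)^2 := by
          have h14 := pow_one_sub_le ((b₂:ℝ)/k) (by positivity)
            ((div_le_one hkR).mpr hb₂kR) b₁
          have h15 : (b₁:ℝ) * ((b₂:ℝ)/k) = B/k := by rw [hB]; ring
          rwa [h15] at h14
        calc homDensity (bipartite b₁ b₂) (⊤ : SimpleGraph (Fin k))
            ≤ (1 - (b₂:ℝ)/k)^b₁ + ((b₁:ℝ) * (b₂:ℝ)^3)/(k:ℝ)^2 := h12
          _ ≤ (1 - B/k + (B/k)^2) + ((b₁:ℝ) * (b₂:ℝ)^3)/(k:ℝ)^2 := add_le_add_left h13 _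
          _ = 1 - B/k + E/k^2 := by rw [hE]; ring
      have hEk : E/k^2 < D/k := by
        have h16 : E < k * D := (div_lt_iff₀ hD0).mp hkED
        rw [div_lt_div_iff₀ (by positivity) hkR]
        nlinarith [mul_pos (sub_pos.mpr h16) hkR]
      have htb2 : homDensity (bipartite b₁ b₂) (⊤ : SimpleGraph (Fin k)) < 1 - C*A/k := by
        have h17 : 1 - B/k + D/k = 1 - C*A/k := by rw [hD]; ring
        have h18 : 1 - B/k + E/k^2 < 1 - B/k + D/k := by linarith
        linarith
      have h1t : C*(1 - homDensity (bipartite a₁ a₂) (⊤ : SimpleGraph (Fin k))) ≤ C*A/k := by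
        rw [mul_div_assoc]
        apply mul_le_mul_of_nonneg_left _ hC0.le
        linarith
      have hrp := rpow_ge_one_sub (homDensity (bipartite a₁ a₂) (⊤ : SimpleGraph (Fin k)))
        hta_pos hta_le1 c'
      rw [← hC] at hrp
      have hchain : homDensity (bipartite b₁ b₂) (⊤ : SimpleGraph (Fin k))
          < homDensity (bipartite a₁ a₂) (⊤ : SimpleGraph (Fin k)) ^ c' := by
        have h19 : 1 - C*A/k
            ≤ 1 - C*(1 - homDensity (bipartite a₁ a₂) (⊤ : SimpleGraph (Fin k))) := by
          linarith
        linarith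
      have hfinal : homDensity (bipartite a₁ a₂) (⊤ : SimpleGraph (Fin k)) ^ c'
          ≤ homDensity (bipartite a₁ a₂) (⊤ : SimpleGraph (Fin k)) ^ c :=
        Real.rpow_le_rpow_of_exponent_ge hta_pos hta_le1 (le_max_left _ _)
      exact ⟨k, ⊤, hk0, hta_pos, lt_of_lt_of_le hchain hfinal⟩
end

section
/- Let k ≥ 1 and let a = (a_1, …, a_k) and b = (b_1, …, b_k) be nonincreasing sequences of positive integers with a_1 + ⋯ + a_k = b_1 + ⋯ + b_k. Say that a majorizes b if Σ_{j=1}^i a_j ≥ Σ_{j=1}^i b_j for every 1 ≤ i ≤ k. Let K_a denote the complete multipartite graph with parts of sizes a_1, …, a_k. Then a majorizes b if and only if t(K_a, W) ≥ t(K_b, W) for every finite simple graph W with at least one vertex. -/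
open Finset
set_option linter.unusedSectionVars false
set_option maxHeartbeats 1000000

namespace Stmt17


variable {β : Type} [Fintype β] (W : SimpleGraph β) {k : ℕ}

def sysCond (c : Fin k → ℕ) (F : ∀ m, Fin (c m) → β) : Prop :=
  ∀ m m', m ≠ m' → ∀ x y, W.Adj (F m x) (F m' y)

def Sys (c : Fin k → ℕ) : Type :=
  {F : ∀ m, Fin (c m) → β // sysCond W c F}

noncomputable instance (c : Fin k → ℕ) : Fintype (Sys W c) := by
  unfold Sys
  classical
  infer_instance

def homSysEquiv (c : Fin k → ℕ) :
    (SimpleGraph.completeMultipartiteGraph (fun i => Fin (c i)) →g W) ≃ Sys W c where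
  toFun φ := ⟨fun m x => φ ⟨m, x⟩, fun m m' h x y => φ.map_rel' h⟩
  invFun F := ⟨fun p => F.1 p.1 p.2, fun {p q} h => F.2 p.1 q.1 h p.2 q.2⟩
  left_inv φ := by ext ⟨m, x⟩; rfl
  right_inv F := rfl

lemma card_hom_eq_card_sys (c : Fin k → ℕ) :
    Nat.card (SimpleGraph.completeMultipartiteGraph (fun i => Fin (c i)) →g W)
      = Nat.card (Sys W c) :=
  Nat.card_congr (homSysEquiv W c)


def Sys2 (c : Fin k → ℕ) (s t : ℕ) : Type :=
  {F : (∀ m, Fin (c m) → β) × (Fin s → β) × (Fin t → β) //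
    sysCond W c F.1 ∧ (∀ m x y, W.Adj (F.1 m x) (F.2.1 y)) ∧
      (∀ m x y, W.Adj (F.1 m x) (F.2.2 y)) ∧ (∀ x y, W.Adj (F.2.1 x) (F.2.2 y))}

noncomputable instance (c : Fin k → ℕ) (s t : ℕ) : Fintype (Sys2 W c s t) := by
  unfold Sys2
  classical
  infer_instance

def pS {c : Fin k → ℕ} {s t : ℕ} (F : Sys2 W c s t) (v : β) : Prop :=
  (∀ m x, W.Adj (F.1.1 m x) v) ∧ ∀ y, W.Adj (F.1.2.2 y) v

def pT {c : Fin k → ℕ} {s t : ℕ} (F : Sys2 W c s t) (v : β) : Prop :=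
  (∀ m x, W.Adj (F.1.1 m x) v) ∧ ∀ y, W.Adj (F.1.2.1 y) v

def swapEquiv (c : Fin k → ℕ) (s t : ℕ) : Sys2 W c s t ≃ Sys2 W c t s where
  toFun F := ⟨(F.1.1, F.1.2.2, F.1.2.1),
    F.2.1, F.2.2.2.1, F.2.2.1, fun x y => (F.2.2.2.2 y x).symm⟩
  invFun F := ⟨(F.1.1, F.1.2.2, F.1.2.1),
    F.2.1, F.2.2.2.1, F.2.2.1, fun x y => (F.2.2.2.2 y x).symm⟩
  left_inv _ := rfl
  right_inv _ := rfl

lemma pS_swap {c : Fin k → ℕ} {s t : ℕ} (F : Sys2 W c s t) :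
    pS W (swapEquiv W c s t F) = pT W F := rfl

def extEquivS (c : Fin k → ℕ) (s t : ℕ) :
    Sys2 W c (s + 1) t ≃ Σ F : Sys2 W c s t, {v : β // pS W F v} where
  toFun G := ⟨⟨(G.1.1, Fin.tail G.1.2.1, G.1.2.2),
      G.2.1, fun m x y => G.2.2.1 m x y.succ, G.2.2.2.1,
      fun x y => G.2.2.2.2 x.succ y⟩,
    ⟨G.1.2.1 0, fun m x => G.2.2.1 m x 0, fun y => (G.2.2.2.2 0 y).symm⟩⟩
  invFun x := ⟨(x.1.1.1, Fin.cons x.2.1 x.1.1.2.1, x.1.1.2.2),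
    x.1.2.1,
    fun m xx y => Fin.cases (x.2.2.1 m xx) (fun y' => x.1.2.2.1 m xx y') y,
    x.1.2.2.2.1,
    fun xx y => Fin.cases ((x.2.2.2 y).symm) (fun x' => x.1.2.2.2.2 x' y) xx⟩
  left_inv G := by
    obtain ⟨⟨B, S, T⟩, hG⟩ := G
    apply Subtype.ext
    show (B, Fin.cons (S 0) (Fin.tail S), T) = (B, S, T)
    rw [Fin.cons_self_tail]
  right_inv x := by
    obtain ⟨⟨⟨B, S, T⟩, h⟩, ⟨v, hv⟩⟩ := x
    rfl

lemma card_sys2_succS (c : Fin k → ℕ) (s t : ℕ) :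
    Nat.card (Sys2 W c (s + 1) t)
      = ∑ F : Sys2 W c s t, Nat.card {v : β // pS W F v} := by
  classical
  rw [Nat.card_congr (extEquivS W c s t), Nat.card_eq_fintype_card, Fintype.card_sigma]
  exact Finset.sum_congr rfl fun F _ => (Nat.card_eq_fintype_card).symm

lemma card_sys2_succT (c : Fin k → ℕ) (s t : ℕ) :
    Nat.card (Sys2 W c s (t + 1))
      = ∑ F : Sys2 W c s t, Nat.card {v : β // pT W F v} := by
  rw [Nat.card_congr (swapEquiv W c s (t+1)), card_sys2_succS]
  rw [← Equiv.sum_comp (swapEquiv W c s t) (fun G => Nat.card {v : β // pS W G v})]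
  rfl

lemma pS_symm_fst {c : Fin k → ℕ} {s t : ℕ} (x : Σ F : Sys2 W c s t, {v : β // pS W F v}) :
    pS W ((extEquivS W c s t).symm x) = pS W x.1 := by
  obtain ⟨F, w⟩ := x; rfl

lemma card_pT_symm_le {c : Fin k → ℕ} {s t : ℕ}
    (x : Σ F : Sys2 W c s t, {v : β // pS W F v}) :
    Nat.card {v : β // pT W ((extEquivS W c s t).symm x) v}
      ≤ Nat.card {v : β // pT W x.1 v} := by
  obtain ⟨F, w⟩ := x
  refine Nat.card_le_card_of_injective
    (Subtype.impEmbedding _ _ fun v hv => ⟨hv.1, fun y => ?_⟩) (Subtype.impEmbedding _ _ _).2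
  exact hv.2 y.succ

lemma card_sys2_SS (c : Fin k → ℕ) (s t : ℕ) :
    Nat.card (Sys2 W c (s + 2) t)
      = ∑ F : Sys2 W c s t, Nat.card {v : β // pS W F v} * Nat.card {v : β // pS W F v} := by
  classical
  rw [card_sys2_succS W c (s+1) t]
  rw [← Equiv.sum_comp ((extEquivS W c s t).symm)
    (fun G => Nat.card {v : β // pS W G v})]
  rw [← Finset.univ_sigma_univ, Finset.sum_sigma]
  refine Finset.sum_congr rfl fun F _ => ?_
  have : ∀ w : {v : β // pS W F v},
      Nat.card {v : β // pS W ((extEquivS W c s t).symm ⟨F, w⟩) v}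
        = Nat.card {v : β // pS W F v} := fun w => by rw [pS_symm_fst]
  calc ∑ w : {v : β // pS W F v},
        Nat.card {v : β // pS W ((extEquivS W c s t).symm ⟨F, w⟩) v}
      = ∑ _w : {v : β // pS W F v}, Nat.card {v : β // pS W F v} :=
        Finset.sum_congr rfl fun w _ => this w
    _ = Nat.card {v : β // pS W F v} * Nat.card {v : β // pS W F v} := by
        rw [Finset.sum_const, Finset.card_univ, smul_eq_mul, Nat.card_eq_fintype_card]

lemma card_sys2_TT (c : Fin k → ℕ) (s t : ℕ) :
    Nat.card (Sys2 W c s (t + 2))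
      = ∑ F : Sys2 W c s t, Nat.card {v : β // pT W F v} * Nat.card {v : β // pT W F v} := by
  rw [Nat.card_congr (swapEquiv W c s (t+2)), card_sys2_SS]
  rw [← Equiv.sum_comp (swapEquiv W c s t)
    (fun G => Nat.card {v : β // pS W G v} * Nat.card {v : β // pS W G v})]
  rfl

lemma card_sys2_ST (c : Fin k → ℕ) (s t : ℕ) :
    Nat.card (Sys2 W c (s + 1) (t + 1))
      ≤ ∑ F : Sys2 W c s t, Nat.card {v : β // pS W F v} * Nat.card {v : β // pT W F v} := by
  classical
  rw [card_sys2_succT W c (s+1) t]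
  rw [← Equiv.sum_comp ((extEquivS W c s t).symm)
    (fun G => Nat.card {v : β // pT W G v})]
  rw [← Finset.univ_sigma_univ, Finset.sum_sigma]
  refine Finset.sum_le_sum fun F _ => ?_
  calc ∑ w : {v : β // pS W F v},
        Nat.card {v : β // pT W ((extEquivS W c s t).symm ⟨F, w⟩) v}
      ≤ ∑ _w : {v : β // pS W F v}, Nat.card {v : β // pT W F v} :=
        Finset.sum_le_sum fun w _ => card_pT_symm_le W ⟨F, w⟩
    _ = Nat.card {v : β // pS W F v} * Nat.card {v : β // pT W F v} := by
        simp [Finset.sum_const, Finset.card_univ, Nat.card_eq_fintype_card]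

lemma convex2 (c : Fin k → ℕ) (s t : ℕ) :
    2 * Nat.card (Sys2 W c (s + 1) (t + 1))
      ≤ Nat.card (Sys2 W c (s + 2) t) + Nat.card (Sys2 W c s (t + 2)) := by
  rw [card_sys2_SS, card_sys2_TT]
  calc 2 * Nat.card (Sys2 W c (s + 1) (t + 1))
      ≤ 2 * ∑ F : Sys2 W c s t,
          Nat.card {v : β // pS W F v} * Nat.card {v : β // pT W F v} := by
        exact Nat.mul_le_mul_left 2 (card_sys2_ST W c s t)
    _ = ∑ F : Sys2 W c s t,
          2 * (Nat.card {v : β // pS W F v} * Nat.card {v : β // pT W F v}) := by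
        rw [Finset.mul_sum]
    _ ≤ ∑ F : Sys2 W c s t,
          (Nat.card {v : β // pS W F v} * Nat.card {v : β // pS W F v}
            + Nat.card {v : β // pT W F v} * Nat.card {v : β // pT W F v}) := by
        refine Finset.sum_le_sum fun F _ => ?_
        set p := Nat.card {v : β // pS W F v}
        set q := Nat.card {v : β // pT W F v}
        have h : 2 * ((p : ℤ) * q) ≤ p * p + q * q := by nlinarith [sq_nonneg ((p : ℤ) - q)]
        exact_mod_cast h
    _ = _ := Finset.sum_add_distrib

def zeroAt (c : Fin k → ℕ) (i j : Fin k) : Fin k → ℕ :=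
  fun m => if m = i ∨ m = j then 0 else c m

lemma zeroAt_pos {c : Fin k → ℕ} {i j m : Fin k} (h : m = i ∨ m = j) :
    zeroAt c i j m = 0 := by simp [zeroAt, h]

lemma zeroAt_neg {c : Fin k → ℕ} {i j m : Fin k} (h : ¬(m = i ∨ m = j)) :
    zeroAt c i j m = c m := by simp [zeroAt, h]

def bridgeEquiv (c : Fin k → ℕ) (i j : Fin k) (hij : i ≠ j) :
    Sys W c ≃ Sys2 W (zeroAt c i j) (c i) (c j) where
  toFun F := ⟨(fun m => if h : m = i ∨ m = j then fun x => absurd x.isLt (by have := zeroAt_pos (c := c) h; omega)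
        else fun x => F.1 m (Fin.cast (zeroAt_neg h) x),
      F.1 i, F.1 j), by
    refine ⟨?_, ?_, ?_, ?_⟩
    · intro m m' hne x y
      by_cases h : m = i ∨ m = j
      · exact absurd x.isLt (by have := zeroAt_pos (c := c) h; omega)
      · by_cases h' : m' = i ∨ m' = j
        · exact absurd y.isLt (by have := zeroAt_pos (c := c) h'; omega)
        · simp only [dif_neg h, dif_neg h']
          exact F.2 m m' hne _ _
    · intro m x y
      by_cases h : m = i ∨ m = j
      · exact absurd x.isLt (by have := zeroAt_pos (c := c) h; omega)
      · simp only [dif_neg h]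
        exact F.2 m i (fun e => h (Or.inl e)) _ _
    · intro m x y
      by_cases h : m = i ∨ m = j
      · exact absurd x.isLt (by have := zeroAt_pos (c := c) h; omega)
      · simp only [dif_neg h]
        exact F.2 m j (fun e => h (Or.inr e)) _ _
    · exact fun x y => F.2 i j hij _ _⟩
  invFun G := ⟨fun m =>
      if h : m = i then fun x => G.1.2.1 (Fin.cast (congrArg c h) x)
      else if h' : m = j then fun x => G.1.2.2 (Fin.cast (congrArg c h') x)
      else fun x => G.1.1 m (Fin.cast (by rw [zeroAt_neg (by tauto)]) x), by
    intro m m' hne x y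
    by_cases h1 : m = i
    · by_cases h3 : m' = i
      · exact absurd (h1.trans h3.symm) hne
      · by_cases h4 : m' = j
        · simp only [dif_pos h1, dif_neg h3, dif_pos h4]
          exact G.2.2.2.2 _ _
        · simp only [dif_pos h1, dif_neg h3, dif_neg h4]
          exact (G.2.2.1 m' _ _).symm
    · by_cases h2 : m = j
      · by_cases h3 : m' = i
        · simp only [dif_neg h1, dif_pos h2, dif_pos h3]
          exact (G.2.2.2.2 _ _).symm
        · by_cases h4 : m' = j
          · exact absurd (h2.trans h4.symm) hne
          · simp only [dif_neg h1, dif_pos h2, dif_neg h3, dif_neg h4]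
            exact (G.2.2.2.1 m' _ _).symm
      · by_cases h3 : m' = i
        · simp only [dif_neg h1, dif_neg h2, dif_pos h3]
          exact G.2.2.1 m _ _
        · by_cases h4 : m' = j
          · simp only [dif_neg h1, dif_neg h2, dif_neg h3, dif_pos h4]
            exact G.2.2.2.1 m _ _
          · simp only [dif_neg h1, dif_neg h2, dif_neg h3, dif_neg h4]
            exact G.2.1 m m' hne _ _⟩
  left_inv F := by
    apply Subtype.ext
    funext m x
    by_cases h1 : m = i
    · subst h1
      simp only [dif_pos rfl]
      exact congrArg _ (Fin.ext rfl)
    · by_cases h2 : m = j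
      · subst h2
        simp only [dif_neg h1, dif_pos rfl]
        exact congrArg _ (Fin.ext rfl)
      · simp only [dif_neg h1, dif_neg h2, dif_neg (show ¬(m = i ∨ m = j) by tauto)]
        exact congrArg _ (Fin.ext rfl)
  right_inv G := by
    apply Subtype.ext
    refine Prod.ext ?_ (Prod.ext ?_ ?_)
    · funext m x
      by_cases h : m = i ∨ m = j
      · exact absurd x.isLt (by have := zeroAt_pos (c := c) h; omega)
      · have h1 : ¬ m = i := fun e => h (Or.inl e)
        have h2 : ¬ m = j := fun e => h (Or.inr e)
        simp only [dif_neg h, dif_neg h1, dif_neg h2]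
        exact congrArg _ (Fin.ext rfl)
    · funext x
      simp only [dif_pos rfl]
      exact congrArg _ (Fin.ext rfl)
    · funext x
      simp only [dif_neg hij.symm, dif_pos rfl]
      exact congrArg _ (Fin.ext rfl)



lemma discreteStep (f : ℕ → ℕ → ℕ) (hsym : ∀ s t, f s t = f t s)
    (hconv : ∀ s t, 2 * f (s+1) (t+1) ≤ f (s+2) t + f s (t+2))
    (x y : ℕ) (hy : 1 ≤ y) (hxy : y ≤ x) : f x y ≤ f (x+1) (y-1) := by
  set n := x + y with hn
  set G : ℕ → ℤ := fun σ => (f σ (n - σ) : ℤ) with hG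
  have hconv' : ∀ σ, 1 ≤ σ → σ + 1 ≤ n → G σ - G (σ-1) ≤ G (σ+1) - G σ := by
    intro σ h1 h2
    have h := hconv (σ-1) (n-σ-1)
    have e1 : σ - 1 + 1 = σ := by omega
    have e2 : n - σ - 1 + 1 = n - σ := by omega
    have e3 : σ - 1 + 2 = σ + 1 := by omega
    have e4 : n - σ - 1 + 2 = n - (σ-1) := by omega
    have e5 : n - σ - 1 = n - (σ+1) := by omega
    rw [e1, e2, e3, e4, e5] at h
    have h' : (2 * f σ (n - σ) : ℤ) ≤ f (σ+1) (n-(σ+1)) + f (σ-1) (n-(σ-1)) := by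
      exact_mod_cast h
    simp only [hG]
    omega
  have mono : ∀ p q, p ≤ q → q + 1 ≤ n → G (p+1) - G p ≤ G (q+1) - G q := by
    intro p q hpq
    induction q, hpq using Nat.le_induction with
    | base => intro _; exact le_refl _
    | succ q hq' ih =>
      intro hq
      have step := hconv' (q+1) (by omega) (by omega)
      have e : q + 1 - 1 = q := by omega
      rw [e] at step
      exact le_trans (ih (by omega)) step
  have hsymG : ∀ σ, σ ≤ n → G σ = G (n - σ) := by
    intro σ h
    simp only [hG]
    have e : n - (n - σ) = σ := by omega
    rw [e, hsym]
  have h2 := mono (y-1) x (by omega) (by omega)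
  have ey : y - 1 + 1 = y := by omega
  have ex : n - y = x := by omega
  have ex1 : n - (y-1) = x + 1 := by omega
  have hGy : G y = G x := by rw [hsymG y (by omega), ex]
  have hGy1 : G (y-1) = G (x+1) := by rw [hsymG (y-1) (by omega), ex1]
  rw [ey, hGy, hGy1] at h2
  have hfin : G x ≤ G (x+1) := by omega
  have g1 : G x = (f x y : ℤ) := by simp only [hG]; rw [show n - x = y by omega]
  have g2 : G (x+1) = (f (x+1) (y-1) : ℤ) := by simp only [hG]; rw [show n - (x+1) = y - 1 by omega]
  rw [g1, g2] at hfin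
  exact_mod_cast hfin


lemma step (c : Fin k → ℕ) (i j : Fin k) (hij : i ≠ j) (h1 : 1 ≤ c j) (h2 : c j ≤ c i) :
    Nat.card (Sys W c) ≤
      Nat.card (Sys W (Function.update (Function.update c i (c i + 1)) j (c j - 1))) := by
  classical
  set c' := Function.update (Function.update c i (c i + 1)) j (c j - 1) with hc'
  have hzero : zeroAt c' i j = zeroAt c i j := by
    funext m
    by_cases h : m = i ∨ m = j
    · simp [zeroAt, h]
    · have hm1 : m ≠ i := fun e => h (Or.inl e)
      have hm2 : m ≠ j := fun e => h (Or.inr e)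
      simp [zeroAt, h, hc', Function.update_of_ne hm1, Function.update_of_ne hm2]
  have hci' : c' i = c i + 1 := by
    rw [hc', Function.update_of_ne hij, Function.update_self]
  have hcj' : c' j = c j - 1 := by
    rw [hc', Function.update_self]
  have hsym : ∀ s t, Nat.card (Sys2 W (zeroAt c i j) s t)
      = Nat.card (Sys2 W (zeroAt c i j) t s) :=
    fun s t => Nat.card_congr (swapEquiv W (zeroAt c i j) s t)
  have key := discreteStep (fun s t => Nat.card (Sys2 W (zeroAt c i j) s t)) hsym
    (fun s t => convex2 W (zeroAt c i j) s t) (c i) (c j) h1 h2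
  calc Nat.card (Sys W c) = Nat.card (Sys2 W (zeroAt c i j) (c i) (c j)) :=
        Nat.card_congr (bridgeEquiv W c i j hij)
    _ ≤ Nat.card (Sys2 W (zeroAt c i j) (c i + 1) (c j - 1)) := key
    _ = Nat.card (Sys W c') := by
        have h := Nat.card_congr (bridgeEquiv W c' i j hij)
        rw [hzero, hci', hcj'] at h
        exact h.symm

lemma sum_pair_erase (f : Fin k → ℕ) (S : Finset (Fin k)) {i j : Fin k} (hij : i ≠ j)
    (hi : i ∈ S) (hj : j ∈ S) :
    ∑ m ∈ S, f m = f i + f j + ∑ m ∈ (S.erase i).erase j, f m := by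
  rw [← Finset.add_sum_erase S f hi,
    ← Finset.add_sum_erase (S.erase i) f (Finset.mem_erase.mpr ⟨Ne.symm hij, hj⟩)]
  ring

lemma chainAux (a b : Fin k → ℕ) (hb : Antitone b) :
    ∀ D : ℕ, ∀ c : Fin k → ℕ, (∑ m, (a m - c m)) = D →
      (∀ l, ∑ m ∈ Iic l, c m ≤ ∑ m ∈ Iic l, a m) →
      (∑ m, c m = ∑ m, a m) →
      (∀ m, min (a m) (b m) ≤ c m ∧ c m ≤ max (a m) (b m)) →
      Nat.card (Sys W c) ≤ Nat.card (Sys W a) := by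
  intro D
  induction D using Nat.strong_induction_on with
  | _ D ih =>
  intro c hD hmaj hsum hsand
  classical
  by_cases hac : c = a
  · rw [hac]
  -- find i, the first index where a and c differ
  have hs : (univ.filter (fun m => a m ≠ c m)).Nonempty := by
    by_contra h
    apply hac
    funext m
    by_contra hm
    exact h ⟨m, Finset.mem_filter.mpr ⟨Finset.mem_univ m, fun e => hm e.symm⟩⟩
  set i := (univ.filter (fun m => a m ≠ c m)).min' hs with hidef
  have hi_mem : a i ≠ c i := by
    have := Finset.min'_mem (univ.filter (fun m => a m ≠ c m)) hs
    exact (Finset.mem_filter.mp this).2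
  have hlow : ∀ m, m < i → a m = c m := by
    intro m hm
    by_contra hne
    have := Finset.min'_le (univ.filter (fun m => a m ≠ c m)) m
      (Finset.mem_filter.mpr ⟨Finset.mem_univ m, hne⟩)
    exact absurd hm (not_lt.mpr this)
  have hci : c i < a i := by
    have h1 := hmaj i
    rw [← Finset.Iio_insert, Finset.sum_insert (by simp),
      Finset.sum_insert (by simp)] at h1
    have h2 : ∑ m ∈ Iio i, c m = ∑ m ∈ Iio i, a m :=
      Finset.sum_congr rfl fun m hm => (hlow m (Finset.mem_Iio.mp hm)).symm
    have : c i ≤ a i := by omega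
    exact lt_of_le_of_ne this (fun e => hi_mem e.symm)
  -- find j, the first index where c exceeds a
  have ht : (univ.filter (fun m => a m < c m)).Nonempty := by
    by_contra h
    have hle : ∀ m ∈ (univ : Finset (Fin k)), c m ≤ a m := by
      intro m _
      by_contra hm
      exact h ⟨m, Finset.mem_filter.mpr ⟨Finset.mem_univ m, by omega⟩⟩
    have := (Finset.sum_eq_sum_iff_of_le hle).mp hsum i (Finset.mem_univ i)
    omega
  set j := (univ.filter (fun m => a m < c m)).min' ht with hjdef
  have hj_mem : a j < c j := by
    have := Finset.min'_mem (univ.filter (fun m => a m < c m)) ht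
    exact (Finset.mem_filter.mp this).2
  have hjlow : ∀ m, m < j → c m ≤ a m := by
    intro m hm
    by_contra hne
    have := Finset.min'_le (univ.filter (fun m => a m < c m)) m
      (Finset.mem_filter.mpr ⟨Finset.mem_univ m, by omega⟩)
    exact absurd hm (not_lt.mpr this)
  have hij : i < j := by
    rcases lt_trichotomy i j with h | h | h
    · exact h
    · exfalso; rw [h] at hci; omega
    · exfalso; have := hlow j h; omega
  have hijne : i ≠ j := ne_of_lt hij
  -- sandwich consequences
  have hbi : b i ≤ c i := by have := hsand i; omega
  have hcjb : c j ≤ b j := by have := hsand j; omega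
  have hbij : b j ≤ b i := hb hij.le
  have hxy : c j ≤ c i := by omega
  have h1j : 1 ≤ c j := by omega
  set c'' := Function.update (Function.update c i (c i + 1)) j (c j - 1) with hc''
  have hc''i : c'' i = c i + 1 := by
    rw [hc'', Function.update_of_ne hijne, Function.update_self]
  have hc''j : c'' j = c j - 1 := by rw [hc'', Function.update_self]
  have hc''o : ∀ m, m ≠ i → m ≠ j → c'' m = c m := by
    intro m h1 h2
    rw [hc'', Function.update_of_ne h2, Function.update_of_ne h1]
  have hstep := step W c i j hijne h1j hxy
  -- new measure
  have hmeas : ∑ m, (a m - c'' m) < D := by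
    rw [← hD]
    apply Finset.sum_lt_sum
    · intro m _
      by_cases h1 : m = i
      · subst h1; rw [hc''i]; omega
      · by_cases h2 : m = j
        · subst h2; rw [hc''j]; omega
        · rw [hc''o m h1 h2]
    · exact ⟨i, Finset.mem_univ i, by rw [hc''i]; omega⟩
  -- new majorization
  have hmaj'' : ∀ l, ∑ m ∈ Iic l, c'' m ≤ ∑ m ∈ Iic l, a m := by
    intro l
    by_cases hl1 : l < i
    · have : ∑ m ∈ Iic l, c'' m = ∑ m ∈ Iic l, c m := by
        apply Finset.sum_congr rfl
        intro m hm
        have hml : m ≤ l := Finset.mem_Iic.mp hm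
        exact hc''o m (by intro e; subst e; exact absurd hl1 (not_lt.mpr hml))
          (by intro e; subst e; omega)
      rw [this]; exact hmaj l
    · push_neg at hl1
      by_cases hl2 : l < j
      · -- i ∈ Iic l, j ∉ Iic l; strict inequality available
        have hiI : i ∈ Iic l := Finset.mem_Iic.mpr hl1
        have hsplit : ∑ m ∈ Iic l, c'' m = c'' i + ∑ m ∈ (Iic l).erase i, c'' m :=
          (Finset.add_sum_erase _ c'' hiI).symm
        have hsplit2 : ∑ m ∈ Iic l, c m = c i + ∑ m ∈ (Iic l).erase i, c m :=
          (Finset.add_sum_erase _ c hiI).symm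
        have heq : ∑ m ∈ (Iic l).erase i, c'' m = ∑ m ∈ (Iic l).erase i, c m := by
          apply Finset.sum_congr rfl
          intro m hm
          have h1 := (Finset.mem_erase.mp hm).1
          have h2 : m ≤ l := Finset.mem_Iic.mp (Finset.mem_erase.mp hm).2
          exact hc''o m h1 (by intro e; subst e; omega)
        have hstrict : ∑ m ∈ Iic l, c m < ∑ m ∈ Iic l, a m := by
          apply Finset.sum_lt_sum
          · intro m hm
            have hml : m ≤ l := Finset.mem_Iic.mp hm
            rcases lt_trichotomy m i with h | h | h
            · exact le_of_eq (hlow m h).symm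
            · subst h; omega
            · exact hjlow m (by omega)
          · exact ⟨i, hiI, hci⟩
        omega
      · push_neg at hl2
        have hiI : i ∈ Iic l := Finset.mem_Iic.mpr (by omega)
        have hjI : j ∈ Iic l := Finset.mem_Iic.mpr hl2
        have e1 := sum_pair_erase c'' (Iic l) hijne hiI hjI
        have e2 := sum_pair_erase c (Iic l) hijne hiI hjI
        have heq : ∑ m ∈ ((Iic l).erase i).erase j, c'' m
            = ∑ m ∈ ((Iic l).erase i).erase j, c m := by
          apply Finset.sum_congr rfl
          intro m hm
          have h2 := (Finset.mem_erase.mp hm).1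
          have h1 := (Finset.mem_erase.mp (Finset.mem_erase.mp hm).2).1
          exact hc''o m h1 h2
        have := hmaj l
        omega
  -- new total sum
  have hsum'' : ∑ m, c'' m = ∑ m, a m := by
    have e1 := sum_pair_erase c'' univ hijne (Finset.mem_univ i) (Finset.mem_univ j)
    have e2 := sum_pair_erase c univ hijne (Finset.mem_univ i) (Finset.mem_univ j)
    have heq : ∑ m ∈ (univ.erase i).erase j, c'' m = ∑ m ∈ (univ.erase i).erase j, c m := by
      apply Finset.sum_congr rfl
      intro m hm
      have h2 := (Finset.mem_erase.mp hm).1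
      have h1 := (Finset.mem_erase.mp (Finset.mem_erase.mp hm).2).1
      exact hc''o m h1 h2
    omega
  -- new sandwich
  have hsand'' : ∀ m, min (a m) (b m) ≤ c'' m ∧ c'' m ≤ max (a m) (b m) := by
    intro m
    by_cases h1 : m = i
    · subst h1; rw [hc''i]; have := hsand i; omega
    · by_cases h2 : m = j
      · subst h2; rw [hc''j]; have := hsand j; omega
      · rw [hc''o m h1 h2]; exact hsand m
  exact le_trans hstep (ih _ hmeas c'' rfl hmaj'' hsum'' hsand'')

lemma chain (a b : Fin k → ℕ) (hb : Antitone b)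
    (hmaj : ∀ l, ∑ m ∈ Iic l, b m ≤ ∑ m ∈ Iic l, a m)
    (hsum : ∑ m, b m = ∑ m, a m) :
    Nat.card (Sys W b) ≤ Nat.card (Sys W a) :=
  chainAux W a b hb _ b rfl hmaj hsum
    (fun m => ⟨min_le_right _ _, le_max_right _ _⟩)

/-! ### Reverse direction machinery -/

/-- Proper colorings of the complete multipartite graph with `k` colors. -/
def PColor (c : Fin k → ℕ) : Type :=
  {σ : (Σ p, Fin (c p)) → Fin k //
    ∀ v v' : Σ p, Fin (c p), v.1 ≠ v'.1 → σ v ≠ σ v'}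

noncomputable instance (c : Fin k → ℕ) : Fintype (PColor (k := k) c) := by
  unfold PColor
  classical
  infer_instance

def homMultiEquiv (c w : Fin k → ℕ) :
    ((SimpleGraph.completeMultipartiteGraph fun p => Fin (c p)) →g
      (SimpleGraph.completeMultipartiteGraph fun q => Fin (w q)))
      ≃ Σ σ : PColor c, ∀ v : Σ p, Fin (c p), Fin (w (σ.1 v)) where
  toFun φ := ⟨⟨fun v => (φ v).1, fun v v' h => φ.map_rel' h⟩, fun v => (φ v).2⟩
  invFun x := ⟨fun v => ⟨x.1.1 v, x.2 v⟩, fun {v v'} h => x.1.2 v v' h⟩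
  left_inv φ := rfl
  right_inv x := rfl

lemma card_hom_multi (c w : Fin k → ℕ) :
    Nat.card ((SimpleGraph.completeMultipartiteGraph fun p => Fin (c p)) →g
        (SimpleGraph.completeMultipartiteGraph fun q => Fin (w q)))
      = ∑ σ : PColor c, ∏ v : Σ p, Fin (c p), w (σ.1 v) := by
  classical
  rw [Nat.card_congr (homMultiEquiv c w), Nat.card_eq_fintype_card, Fintype.card_sigma]
  refine Finset.sum_congr rfl fun σ _ => ?_
  simp [Fintype.card_pi]

/-- Exchange lemma: for an antitone function, the sum over any finset of cardinality
at most `|Iic i₀|` is at most the sum over `Iic i₀`. -/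
lemma antitone_sum_le (a : Fin k → ℕ) (ha : Antitone a) (i₀ : Fin k) :
    ∀ n : ℕ, ∀ T : Finset (Fin k), (T \ Iic i₀).card = n → T.card ≤ (Iic i₀).card →
      ∑ p ∈ T, a p ≤ ∑ p ∈ Iic i₀, a p := by
  intro n
  induction n using Nat.strong_induction_on with
  | _ n ih =>
  intro T hT hTcard
  classical
  rcases Nat.eq_zero_or_pos n with h0 | hpos
  · have hsub : T ⊆ Iic i₀ := by
      intro p hp
      by_contra hnp
      have : p ∈ T \ Iic i₀ := Finset.mem_sdiff.mpr ⟨hp, hnp⟩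
      rw [h0] at hT
      exact absurd (Finset.card_eq_zero.mp hT ▸ this) (Finset.notMem_empty p)
    exact Finset.sum_le_sum_of_subset hsub
  · obtain ⟨p, hp⟩ := Finset.card_pos.mp (hT ▸ hpos)
    have hpT : p ∈ T := (Finset.mem_sdiff.mp hp).1
    have hpI : p ∉ Iic i₀ := (Finset.mem_sdiff.mp hp).2
    have hq : (Iic i₀ \ T).Nonempty := by
      by_contra hempty
      have hsub : Iic i₀ ⊆ T := by
        intro q hqI
        by_contra hqT
        exact hempty ⟨q, Finset.mem_sdiff.mpr ⟨hqI, hqT⟩⟩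
      have : Iic i₀ ⊂ T := ⟨hsub, fun h => hpI (h hpT)⟩
      exact absurd hTcard (not_le.mpr (Finset.card_lt_card this))
    obtain ⟨q, hq⟩ := hq
    have hqI : q ∈ Iic i₀ := (Finset.mem_sdiff.mp hq).1
    have hqT : q ∉ T := (Finset.mem_sdiff.mp hq).2
    set T' := insert q (T.erase p) with hT'
    have hqe : q ∉ T.erase p := fun h => hqT (Finset.mem_of_mem_erase h)
    have hcard' : T'.card = T.card := by
      rw [hT', Finset.card_insert_of_notMem hqe, Finset.card_erase_of_mem hpT]
      have : 1 ≤ T.card := Finset.card_pos.mpr ⟨p, hpT⟩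
      omega
    have hmeas : (T' \ Iic i₀).card = n - 1 := by
      have he : T' \ Iic i₀ = (T \ Iic i₀).erase p := by
        ext m
        simp only [hT', Finset.mem_sdiff, Finset.mem_insert, Finset.mem_erase]
        constructor
        · rintro ⟨hm1 | hm2, hm3⟩
          · exact absurd (hm1 ▸ hqI) hm3
          · exact ⟨hm2.1, hm2.2, hm3⟩
        · rintro ⟨hm1, hm2, hm3⟩
          exact ⟨Or.inr ⟨hm1, hm2⟩, hm3⟩
      rw [he, Finset.card_erase_of_mem hp, hT]
    have hle : a p ≤ a q := by
      apply ha
      have h1 : q ≤ i₀ := Finset.mem_Iic.mp hqI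
      have h2 : ¬ p ≤ i₀ := fun h => hpI (Finset.mem_Iic.mpr h)
      exact le_trans h1 (le_of_not_ge h2)
    have hsum : ∑ m ∈ T, a m ≤ ∑ m ∈ T', a m := by
      rw [hT', Finset.sum_insert hqe, ← Finset.add_sum_erase T a hpT]
      omega
    exact le_trans hsum (ih (n-1) (by omega) T' hmeas (hcard' ▸ hTcard))

/-- The subtype-of-sigma equivalence. -/
def sigmaSubtypeEquiv (c : Fin k → ℕ) (Q : (Σ p, Fin (c p)) → Prop) :
    {v : Σ p, Fin (c p) // Q v} ≃ Σ p, {x : Fin (c p) // Q ⟨p, x⟩} where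
  toFun z := ⟨z.1.1, ⟨z.1.2, z.2⟩⟩
  invFun z := ⟨⟨z.1, z.2.1⟩, z.2.2⟩
  left_inv := by rintro ⟨⟨p, x⟩, h⟩; rfl
  right_inv := by rintro ⟨p, ⟨x, h⟩⟩; rfl

/-- Key combinatorial bound: any proper coloring puts at most `∑_{p ≤ i₀} a p`
vertices into the first `i₀ + 1` color classes. -/
lemma pcolor_count_le (a : Fin k → ℕ) (ha : Antitone a) (i₀ : Fin k) (σ : PColor a) :
    Nat.card {v : Σ p, Fin (a p) // σ.1 v ≤ i₀} ≤ ∑ p ∈ Iic i₀, a p := by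
  classical
  rw [Nat.card_congr (sigmaSubtypeEquiv a (fun v => σ.1 v ≤ i₀)),
    Nat.card_eq_fintype_card, Fintype.card_sigma]
  set T := univ.filter (fun p : Fin k => ∃ x : Fin (a p), σ.1 ⟨p, x⟩ ≤ i₀) with hTdef
  have hzero : ∀ p ∉ T, Fintype.card {x : Fin (a p) // σ.1 ⟨p, x⟩ ≤ i₀} = 0 := by
    intro p hp
    rw [Fintype.card_eq_zero_iff]
    constructor
    intro x
    exact hp (Finset.mem_filter.mpr ⟨Finset.mem_univ p, ⟨x.1, x.2⟩⟩)
  have h1 : ∑ p : Fin k, Fintype.card {x : Fin (a p) // σ.1 ⟨p, x⟩ ≤ i₀}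
      = ∑ p ∈ T, Fintype.card {x : Fin (a p) // σ.1 ⟨p, x⟩ ≤ i₀} :=
    (Finset.sum_subset (Finset.subset_univ T) (fun p _ hp => hzero p hp)).symm
  have h2 : ∑ p ∈ T, Fintype.card {x : Fin (a p) // σ.1 ⟨p, x⟩ ≤ i₀} ≤ ∑ p ∈ T, a p := by
    refine Finset.sum_le_sum fun p _ => ?_
    calc Fintype.card {x : Fin (a p) // σ.1 ⟨p, x⟩ ≤ i₀} ≤ Fintype.card (Fin (a p)) :=
          Fintype.card_subtype_le _
      _ = a p := Fintype.card_fin _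
  have hTcard : T.card ≤ (Iic i₀).card := by
    have hmaps : ∀ p ∈ T, (fun p => if h : ∃ x : Fin (a p), σ.1 ⟨p, x⟩ ≤ i₀
        then σ.1 ⟨p, h.choose⟩ else p) p ∈ Iic i₀ := by
      intro p hp
      have hex := (Finset.mem_filter.mp hp).2
      simp only [dif_pos hex]
      exact Finset.mem_Iic.mpr hex.choose_spec
    refine Finset.card_le_card_of_injOn _ hmaps ?_
    intro p hp p' hp' heq
    by_contra hne
    have hex := (Finset.mem_filter.mp hp).2
    have hex' := (Finset.mem_filter.mp hp').2
    simp only [dif_pos hex, dif_pos hex'] at heq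
    exact σ.2 ⟨p, hex.choose⟩ ⟨p', hex'.choose⟩ hne heq
  have h3 : ∑ p ∈ T, a p ≤ ∑ p ∈ Iic i₀, a p :=
    antitone_sum_le a ha i₀ _ T rfl hTcard
  omega

lemma witness_lower (b : Fin k → ℕ) (i₀ : Fin k) (N : ℕ) :
    N ^ (∑ p ∈ Iic i₀, b p) ≤
      Nat.card ((SimpleGraph.completeMultipartiteGraph fun p => Fin (b p)) →g
        (SimpleGraph.completeMultipartiteGraph fun q => Fin (if q ≤ i₀ then N else 1))) := by
  classical
  rw [card_hom_multi]
  set σ₀ : PColor b := ⟨fun v => v.1, fun v v' h => h⟩ with hσ₀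
  have hterm : ∏ v : Σ p, Fin (b p), (if σ₀.1 v ≤ i₀ then N else 1)
      = N ^ (∑ p ∈ Iic i₀, b p) := by
    rw [← Finset.univ_sigma_univ, Finset.prod_sigma]
    have h1 : ∀ p : Fin k, (∏ _x : Fin (b p),
        (if (σ₀.1 ⟨p, _x⟩) ≤ i₀ then N else 1)) = if p ≤ i₀ then N ^ (b p) else 1 := by
      intro p
      have : ∀ x : Fin (b p), (if (σ₀.1 ⟨p, x⟩) ≤ i₀ then N else 1)
          = if p ≤ i₀ then N else 1 := fun x => rfl
      rw [Finset.prod_congr rfl fun x _ => this x, Finset.prod_const]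
      by_cases h : p ≤ i₀ <;> simp [h]
    rw [Finset.prod_congr rfl fun p _ => h1 p, ← Finset.prod_filter]
    have h2 : univ.filter (fun p : Fin k => p ≤ i₀) = Iic i₀ := by ext p; simp
    rw [h2, Finset.prod_pow_eq_pow_sum]
  calc N ^ (∑ p ∈ Iic i₀, b p)
      = ∏ v : Σ p, Fin (b p), (if σ₀.1 v ≤ i₀ then N else 1) := hterm.symm
    _ ≤ ∑ σ : PColor b, ∏ v : Σ p, Fin (b p), (if σ.1 v ≤ i₀ then N else 1) :=
        Finset.single_le_sum
          (f := fun σ : PColor b => ∏ v : Σ p, Fin (b p), if σ.1 v ≤ i₀ then N else 1)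
          (fun σ _ => Nat.zero_le _) (Finset.mem_univ σ₀)

lemma witness_upper (a : Fin k → ℕ) (ha : Antitone a) (i₀ : Fin k) (N : ℕ) (hN : 1 ≤ N) :
    Nat.card ((SimpleGraph.completeMultipartiteGraph fun p => Fin (a p)) →g
        (SimpleGraph.completeMultipartiteGraph fun q => Fin (if q ≤ i₀ then N else 1)))
      ≤ Fintype.card ((Σ p, Fin (a p)) → Fin k) * N ^ (∑ p ∈ Iic i₀, a p) := by
  classical
  rw [card_hom_multi]
  have hbound : ∀ σ : PColor a,
      (∏ v : Σ p, Fin (a p), (if σ.1 v ≤ i₀ then N else 1))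
        ≤ N ^ (∑ p ∈ Iic i₀, a p) := by
    intro σ
    have h1 : (∏ v : Σ p, Fin (a p), (if σ.1 v ≤ i₀ then N else 1))
        = N ^ (Nat.card {v : Σ p, Fin (a p) // σ.1 v ≤ i₀}) := by
      rw [← Finset.prod_filter, Finset.prod_const, Nat.card_eq_fintype_card,
        Fintype.card_subtype]
    rw [h1]
    exact Nat.pow_le_pow_right hN (pcolor_count_le a ha i₀ σ)
  calc ∑ σ : PColor a, ∏ v : Σ p, Fin (a p), (if σ.1 v ≤ i₀ then N else 1)
      ≤ ∑ _σ : PColor a, N ^ (∑ p ∈ Iic i₀, a p) :=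
        Finset.sum_le_sum fun σ _ => hbound σ
    _ = Fintype.card (PColor a) * N ^ (∑ p ∈ Iic i₀, a p) := by
        rw [Finset.sum_const, Finset.card_univ, smul_eq_mul]
    _ ≤ Fintype.card ((Σ p, Fin (a p)) → Fin k) * N ^ (∑ p ∈ Iic i₀, a p) := by
        apply Nat.mul_le_mul_right
        rw [← Nat.card_eq_fintype_card, ← Nat.card_eq_fintype_card]
        exact Nat.card_le_card_of_injective (fun σ => σ.1)
          (fun σ σ' h => Subtype.ext h)

end Stmt17

theorem stmt_17 (k : ℕ) (hk : 1 ≤ k) (a b : Fin k → ℕ)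
    (ha : ∀ i, 0 < a i) (hb : ∀ i, 0 < b i)
    (hamono : Antitone a) (hbmono : Antitone b)
    (hsum : ∑ i, a i = ∑ i, b i) :
    (∀ i : Fin k, ∑ j ∈ Finset.Iic i, b j ≤ ∑ j ∈ Finset.Iic i, a j) ↔
    (∀ (β : Type) [Fintype β] [Nonempty β] (W : SimpleGraph β),
      homDensity (SimpleGraph.completeMultipartiteGraph fun i => Fin (b i)) W ≤
        homDensity (SimpleGraph.completeMultipartiteGraph fun i => Fin (a i)) W) := by
  classical
  constructor
  · intro hmaj β _ _ W
    have hnum : Nat.card ((SimpleGraph.completeMultipartiteGraph fun i => Fin (b i)) →g W)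
        ≤ Nat.card ((SimpleGraph.completeMultipartiteGraph fun i => Fin (a i)) →g W) := by
      rw [Stmt17.card_hom_eq_card_sys, Stmt17.card_hom_eq_card_sys]
      exact Stmt17.chain W a b hbmono hmaj hsum.symm
    unfold homDensity
    have he : Fintype.card (Σ i, Fin (b i)) = Fintype.card (Σ i, Fin (a i)) := by
      simp only [Fintype.card_sigma, Fintype.card_fin]
      exact hsum.symm
    rw [he]
    have hd : (0 : ℝ) < (Fintype.card β : ℝ) ^ (Fintype.card (Σ i, Fin (a i))) := by
      have h1 : 0 < Fintype.card β := Fintype.card_pos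
      positivity
    exact (div_le_div_iff_of_pos_right hd).mpr (Nat.cast_le.mpr hnum)
  · intro hW i₀
    by_contra hlt
    push_neg at hlt
    set K := Fintype.card ((Σ p, Fin (a p)) → Fin k) with hK
    set N := K + 1 with hN
    haveI hne : Nonempty (Σ q : Fin k, Fin (if q ≤ i₀ then N else 1)) :=
      ⟨⟨i₀, ⟨0, by simp [hN]⟩⟩⟩
    have hWle := hW (Σ q : Fin k, Fin (if q ≤ i₀ then N else 1))
      (SimpleGraph.completeMultipartiteGraph fun q : Fin k => Fin (if q ≤ i₀ then N else 1))
    unfold homDensity at hWle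
    have he : Fintype.card (Σ i, Fin (b i)) = Fintype.card (Σ i, Fin (a i)) := by
      simp only [Fintype.card_sigma, Fintype.card_fin]
      exact hsum.symm
    rw [he] at hWle
    have hd : (0 : ℝ) < (Fintype.card (Σ q : Fin k, Fin (if q ≤ i₀ then N else 1)) : ℝ)
        ^ (Fintype.card (Σ i, Fin (a i))) := by
      have h1 : 0 < Fintype.card (Σ q : Fin k, Fin (if q ≤ i₀ then N else 1)) :=
        Fintype.card_pos
      positivity
    have hnum := Nat.cast_le.mp ((div_le_div_iff_of_pos_right hd).mp hWle)
    have hlow := Stmt17.witness_lower (k := k) b i₀ N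
    have hup := Stmt17.witness_upper (k := k) a hamono i₀ N (by omega)
    have hpow : 0 < N ^ (∑ p ∈ Finset.Iic i₀, a p) := Nat.pow_pos (by omega)
    have hfinal : N ^ (∑ p ∈ Finset.Iic i₀, b p) ≤ K * N ^ (∑ p ∈ Finset.Iic i₀, a p) :=
      le_trans hlow (le_trans hnum hup)
    have hstrict : K * N ^ (∑ p ∈ Finset.Iic i₀, a p) < N ^ (∑ p ∈ Finset.Iic i₀, b p) := by
      calc K * N ^ (∑ p ∈ Finset.Iic i₀, a p)
          < N * N ^ (∑ p ∈ Finset.Iic i₀, a p) :=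
            mul_lt_mul_of_pos_right (by omega) hpow
        _ = N ^ ((∑ p ∈ Finset.Iic i₀, a p) + 1) := by rw [pow_succ]; ring
        _ ≤ N ^ (∑ p ∈ Finset.Iic i₀, b p) := Nat.pow_le_pow_right (by omega) (by omega)
    omega
end
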